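/- For every real α₀ > 1 and every ε > 0, there exist a finite set Y and a joint probability distribution P_{X,Y} on {0,1} × Y such that H_{α₀}(X|Y) > 1 − ε while H_{α₀+1}(X|Y) < ε. In particular, conditional Rényi entropies of orders α₀ and α₀ + 1 of the same pair (X,Y) can be arbitrarily close to the opposite extremal values 1 and 0 simultaneously. -/

import Mathlib

/-- `rpow0 a α = a ^ α` (real power) with the convention `0 ^ 0 = 0`,
so that at `α = 0` sums of `rpow0` count support sizes. -/
noncomputable def rpow0 (a α : ℝ) : ℝ := if a = 0 then 0 else a ^ α

/-- Conditional Rényi entropy of order `α` (base-2 logarithm) of a joint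
distribution `p` on `X × Y`:
`H_α(X|Y) = (1/(1-α)) * log₂ ((Σ_{x,y} p(x,y)^α) / (Σ_y P_Y(y)^α))`. -/
noncomputable def condRenyi {X Y : Type*} [Fintype X] [Fintype Y]
    (α : ℝ) (p : X × Y → ℝ) : ℝ :=
  (1 - α)⁻¹ * Real.logb 2
    ((∑ z : X × Y, rpow0 (p z) α) / (∑ y : Y, rpow0 (∑ x : X, p (x, y)) α))

open Real Filter Topology

lemma rpow0_zero (α : ℝ) : rpow0 0 α = 0 := if_pos rfl

lemma rpow0_of_pos {a : ℝ} (ha : 0 < a) (α : ℝ) : rpow0 a α = a ^ α := if_neg ha.ne'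

/-- The distribution: one deterministic symbol `y = 0` of mass `δ`,
and `n` uniform symbols carrying total mass `1 - δ`. -/
noncomputable def Pdist (δ : ℝ) (n : ℕ) : ZMod 2 × Fin (n + 1) → ℝ :=
  fun z => if z.2 = 0 then (if z.1 = 0 then δ else 0) else (1 - δ) / (2 * n)

lemma zmod2_sum (g : ZMod 2 → ℝ) : ∑ x, g x = g 0 + g 1 := Fin.sum_univ_two g

lemma Pdist_nonneg {δ : ℝ} (h0 : 0 ≤ δ) (h1 : δ ≤ 1) (n : ℕ) :
    ∀ z, 0 ≤ Pdist δ n z := by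
  intro z
  unfold Pdist
  split_ifs with h h'
  · exact h0
  · exact le_refl 0
  · exact div_nonneg (by linarith) (by positivity)

lemma Pdist_sum (δ : ℝ) (n : ℕ) (hn : 0 < n) : ∑ z, Pdist δ n z = 1 := by
  have hn' : (n : ℝ) ≠ 0 := Nat.cast_ne_zero.mpr hn.ne'
  rw [Fintype.sum_prod_type, zmod2_sum]
  simp only [Pdist, Fin.sum_univ_succ, if_pos rfl, Fin.succ_ne_zero, if_neg, ite_false]
  simp only [if_true, Finset.sum_const, Finset.card_univ, Fintype.card_fin, nsmul_eq_mul]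
  rw [if_neg (show (1 : ZMod 2) ≠ 0 by decide)]
  field_simp
  ring

lemma Pdist_joint_sum {δ : ℝ} (hδ0 : 0 < δ) (hδ1 : δ < 1) {n : ℕ} (hn : 0 < n) (α : ℝ) :
    ∑ z, rpow0 (Pdist δ n z) α = δ ^ α + 2 * n * ((1 - δ) / (2 * n)) ^ α := by
  have hc : (0:ℝ) < (1 - δ) / (2 * n) := by
    apply div_pos (by linarith) (by positivity)
  rw [Fintype.sum_prod_type, zmod2_sum]
  simp only [Pdist, Fin.sum_univ_succ, if_pos rfl, Fin.succ_ne_zero, ite_false]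
  simp only [if_true, rpow0_of_pos hδ0, rpow0_zero, rpow0_of_pos hc,
    Finset.sum_const, Finset.card_univ, Fintype.card_fin, nsmul_eq_mul]
  rw [if_neg (show (1 : ZMod 2) ≠ 0 by decide), rpow0_zero]
  ring

lemma Pdist_marginal {δ : ℝ} (n : ℕ) (y : Fin (n + 1)) :
    ∑ x : ZMod 2, Pdist δ n (x, y) = if y = 0 then δ else (1 - δ) / n := by
  rw [zmod2_sum]
  by_cases h : y = 0 <;> simp [Pdist, h] <;> ring

lemma Pdist_marg_sum {δ : ℝ} (hδ0 : 0 < δ) (hδ1 : δ < 1) {n : ℕ} (hn : 0 < n) (α : ℝ) :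
    ∑ y : Fin (n + 1), rpow0 (∑ x : ZMod 2, Pdist δ n (x, y)) α
      = δ ^ α + n * ((1 - δ) / n) ^ α := by
  have hd : (0:ℝ) < (1 - δ) / n := by
    apply div_pos (by linarith) (by exact_mod_cast hn)
  simp only [Pdist_marginal]
  rw [Fin.sum_univ_succ]
  simp only [if_pos rfl, Fin.succ_ne_zero, ite_false, if_true, ite_true,
    rpow0_of_pos hδ0, rpow0_of_pos hd,
    Finset.sum_const, Finset.card_univ, Fintype.card_fin, nsmul_eq_mul]

/-- The entropy as a function of `t = δ^α / ((1-δ)^α n^(1-α))`. -/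
noncomputable def Hfun (α t : ℝ) : ℝ :=
  (1 - α)⁻¹ * Real.logb 2 ((t + 2 ^ (1 - α)) / (t + 1))

lemma condRenyi_Pdist (α : ℝ) {δ : ℝ} (hδ0 : 0 < δ) (hδ1 : δ < 1) {n : ℕ} (hn : 0 < n) :
    condRenyi α (Pdist δ n) = Hfun α (δ ^ α * ((1 - δ) ^ α * (n : ℝ) ^ (1 - α))⁻¹) := by
  have hn0 : (0:ℝ) < n := by exact_mod_cast hn
  have h1δ : (0:ℝ) < 1 - δ := by linarith
  unfold condRenyi Hfun
  rw [Pdist_joint_sum hδ0 hδ1 hn α, Pdist_marg_sum hδ0 hδ1 hn α]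
  congr 2
  have hnum : 2 * (n:ℝ) * ((1 - δ) / (2 * n)) ^ α
      = 2 ^ (1 - α) * ((1 - δ) ^ α * (n:ℝ) ^ (1 - α)) := by
    rw [div_rpow h1δ.le (by positivity), mul_rpow (by norm_num) hn0.le]
    rw [Real.rpow_sub two_pos, Real.rpow_sub hn0, Real.rpow_one, Real.rpow_one]
    field_simp
  have hden : (n:ℝ) * ((1 - δ) / n) ^ α = (1 - δ) ^ α * (n:ℝ) ^ (1 - α) := by
    rw [div_rpow h1δ.le hn0.le, Real.rpow_sub hn0, Real.rpow_one]
    field_simp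
  rw [hnum, hden]
  set s : ℝ := (1 - δ) ^ α * (n:ℝ) ^ (1 - α) with hs
  have hspos : 0 < s := by positivity
  have hA : 0 < δ ^ α := Real.rpow_pos_of_pos hδ0 α
  rw [div_eq_div_iff (by positivity) (by positivity)]
  field_simp

lemma tendsto_Hfun_zero {α : ℝ} (hα : α ≠ 1) : Tendsto (Hfun α) (𝓝 0) (𝓝 1) := by
  have h2 : (0:ℝ) < 2 ^ (1 - α) := Real.rpow_pos_of_pos two_pos _
  have hc : ContinuousAt (Hfun α) 0 := by
    apply ContinuousAt.mul continuousAt_const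
    apply ContinuousAt.comp (Real.continuousAt_logb (by positivity))
    exact ContinuousAt.div (by fun_prop) (by fun_prop) (by norm_num)
  have hval : Hfun α 0 = 1 := by
    unfold Hfun
    rw [zero_add, zero_add, div_one, Real.logb_rpow (by norm_num) (by norm_num)]
    rw [inv_mul_cancel₀ (by intro h; apply hα; linarith [sub_eq_zero.mp h])]
  simpa [hval] using hc.tendsto

lemma tendsto_Hfun_atTop (α : ℝ) : Tendsto (Hfun α) atTop (𝓝 0) := by
  have hratio : Tendsto (fun t : ℝ => (t + 2 ^ (1 - α)) / (t + 1)) atTop (𝓝 1) := by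
    have h1 : Tendsto (fun t : ℝ => 1 + (2 ^ (1 - α) - 1) / (t + 1)) atTop (𝓝 1) := by
      have : Tendsto (fun t : ℝ => (2 ^ (1 - α) - 1) / (t + 1)) atTop (𝓝 0) :=
        Tendsto.div_atTop tendsto_const_nhds (tendsto_atTop_add_const_right _ 1 tendsto_id)
      simpa using tendsto_const_nhds.add this
    apply h1.congr'
    filter_upwards [eventually_ge_atTop (0:ℝ)] with t ht
    have : t + 1 ≠ 0 := by linarith
    field_simp
    ring
  have hlog : Tendsto (fun t : ℝ => Real.logb 2 ((t + 2 ^ (1 - α)) / (t + 1))) atTop (𝓝 0) := by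
    have := (Real.continuousAt_logb (b := 2) (x := (1:ℝ)) one_ne_zero).tendsto.comp hratio
    simpa [Function.comp_def] using this
  show Tendsto (fun t => (1 - α)⁻¹ * Real.logb 2 ((t + 2 ^ (1 - α)) / (t + 1))) atTop (𝓝 0)
  simpa using hlog.const_mul ((1 - α)⁻¹)

theorem condRenyi_opposite_extremes
    (α₀ : ℝ) (hα₀ : 1 < α₀) (ε : ℝ) (hε : 0 < ε) :
    ∃ (m : ℕ) (p : ZMod 2 × Fin m → ℝ),
      (∀ z, 0 ≤ p z) ∧ (∑ z, p z = 1) ∧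
      1 - ε < condRenyi α₀ p ∧ condRenyi (α₀ + 1) p < ε := by
  have hα₀0 : 0 < α₀ := by linarith
  have hα₁0 : 0 < α₀ + 1 := by linarith
  set β : ℝ := ((α₀ - 1) / α₀ + α₀ / (α₀ + 1)) / 2 with hβdef
  have hlt : (α₀ - 1) / α₀ < α₀ / (α₀ + 1) := by
    rw [div_lt_div_iff₀ hα₀0 hα₁0]; nlinarith
  have hβ1 : (α₀ - 1) / α₀ < β := by rw [hβdef]; linarith
  have hβ2 : β < α₀ / (α₀ + 1) := by rw [hβdef]; linarith
  have hβpos : 0 < β := by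
    have h1 : 0 ≤ (α₀ - 1) / α₀ := div_nonneg (by linarith) hα₀0.le
    have h2 : 0 < α₀ / (α₀ + 1) := div_pos hα₀0 hα₁0
    rw [hβdef]; linarith
  have hc1 : α₀ - 1 - β * α₀ < 0 := by
    have := (div_lt_iff₀ hα₀0).mp hβ1; linarith
  have hc2 : 0 < (α₀ + 1) - 1 - β * (α₀ + 1) := by
    have := (lt_div_iff₀ hα₁0).mp hβ2; linarith
  -- key rewriting of the parameter t
  have key : ∀ (α : ℝ) (n : ℕ), 2 ≤ n →
      ((n:ℝ) ^ (-β)) ^ α * ((1 - (n:ℝ) ^ (-β)) ^ α * (n:ℝ) ^ (1 - α))⁻¹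
        = (n:ℝ) ^ (α - 1 - β * α) * (1 - (n:ℝ) ^ (-β)) ^ (-α) := by
    intro α n hn
    have hn1 : (1:ℝ) < n := by
      have : 1 < n := by omega
      exact_mod_cast this
    have hn0 : (0:ℝ) < n := by linarith
    have hδ1 : (n:ℝ) ^ (-β) < 1 := Real.rpow_lt_one_of_one_lt_of_neg hn1 (by linarith)
    have h1δ : (0:ℝ) < 1 - (n:ℝ) ^ (-β) := by linarith
    rw [mul_inv, ← Real.rpow_neg h1δ.le, ← Real.rpow_neg hn0.le, ← Real.rpow_mul hn0.le,
      mul_comm ((1 - (n:ℝ) ^ (-β)) ^ (-α)), ← mul_assoc, ← Real.rpow_add hn0]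
    congr 2
    ring
  have hδ0 : Tendsto (fun n : ℕ => (n:ℝ) ^ (-β)) atTop (𝓝 0) :=
    (tendsto_rpow_neg_atTop hβpos).comp tendsto_natCast_atTop_atTop
  have hB : ∀ α : ℝ, Tendsto (fun n : ℕ => (1 - (n:ℝ) ^ (-β)) ^ (-α)) atTop (𝓝 1) := by
    intro α
    have h1 : Tendsto (fun n : ℕ => 1 - (n:ℝ) ^ (-β)) atTop (𝓝 1) := by
      simpa using tendsto_const_nhds.sub hδ0
    have h2 := ((Real.continuousAt_rpow_const 1 (-α) (Or.inl one_ne_zero)).tendsto).comp h1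
    simpa [Function.comp_def] using h2
  have hA1 : Tendsto (fun n : ℕ => (n:ℝ) ^ (α₀ - 1 - β * α₀)) atTop (𝓝 0) := by
    have h := tendsto_rpow_neg_atTop (y := -(α₀ - 1 - β * α₀)) (by linarith)
    simp only [neg_neg] at h
    exact h.comp tendsto_natCast_atTop_atTop
  have hA2 : Tendsto (fun n : ℕ => (n:ℝ) ^ ((α₀ + 1) - 1 - β * (α₀ + 1))) atTop atTop :=
    (tendsto_rpow_atTop hc2).comp tendsto_natCast_atTop_atTop
  have ht1 : Tendsto (fun n : ℕ =>
      ((n:ℝ) ^ (-β)) ^ α₀ * ((1 - (n:ℝ) ^ (-β)) ^ α₀ * (n:ℝ) ^ (1 - α₀))⁻¹)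
      atTop (𝓝 0) := by
    have h := hA1.mul (hB α₀)
    rw [zero_mul] at h
    apply h.congr'
    filter_upwards [eventually_ge_atTop 2] with n hn
    exact (key α₀ n hn).symm
  have ht2 : Tendsto (fun n : ℕ =>
      ((n:ℝ) ^ (-β)) ^ (α₀ + 1) * ((1 - (n:ℝ) ^ (-β)) ^ (α₀ + 1) * (n:ℝ) ^ (1 - (α₀ + 1)))⁻¹)
      atTop atTop := by
    have h := hA2.atTop_mul_pos one_pos (hB (α₀ + 1))
    apply h.congr'
    filter_upwards [eventually_ge_atTop 2] with n hn
    exact (key (α₀ + 1) n hn).symm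
  have hfacts : ∀ n : ℕ, 2 ≤ n → 0 < (n:ℝ) ^ (-β) ∧ (n:ℝ) ^ (-β) < 1 := by
    intro n hn
    have hn1 : (1:ℝ) < n := by
      have : 1 < n := by omega
      exact_mod_cast this
    exact ⟨Real.rpow_pos_of_pos (by linarith) _,
      Real.rpow_lt_one_of_one_lt_of_neg hn1 (by linarith)⟩
  have hcond1 : Tendsto (fun n : ℕ => condRenyi α₀ (Pdist ((n:ℝ) ^ (-β)) n)) atTop (𝓝 1) := by
    have h := (tendsto_Hfun_zero (by linarith : α₀ ≠ 1)).comp ht1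
    apply h.congr'
    filter_upwards [eventually_ge_atTop 2] with n hn
    obtain ⟨hp, hq⟩ := hfacts n hn
    exact (condRenyi_Pdist α₀ hp hq (by omega)).symm
  have hcond2 : Tendsto (fun n : ℕ => condRenyi (α₀ + 1) (Pdist ((n:ℝ) ^ (-β)) n))
      atTop (𝓝 0) := by
    have h := (tendsto_Hfun_atTop (α₀ + 1)).comp ht2
    apply h.congr'
    filter_upwards [eventually_ge_atTop 2] with n hn
    obtain ⟨hp, hq⟩ := hfacts n hn
    exact (condRenyi_Pdist (α₀ + 1) hp hq (by omega)).symm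
  have e1 : ∀ᶠ n : ℕ in atTop, 1 - ε < condRenyi α₀ (Pdist ((n:ℝ) ^ (-β)) n) :=
    hcond1.eventually (eventually_gt_nhds (by linarith))
  have e2 : ∀ᶠ n : ℕ in atTop, condRenyi (α₀ + 1) (Pdist ((n:ℝ) ^ (-β)) n) < ε :=
    hcond2.eventually (eventually_lt_nhds hε)
  obtain ⟨n, hn2, h1, h2⟩ := ((eventually_ge_atTop 2).and (e1.and e2)).exists
  obtain ⟨hp, hq⟩ := hfacts n hn2
  exact ⟨n + 1, Pdist ((n:ℝ) ^ (-β)) n, Pdist_nonneg hp.le hq.le n,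
    Pdist_sum _ n (by omega), h1, h2⟩
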